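/- Let μ be a probability measure on EuclideanSpace ℝ (Fin n), let σ > 0, and let φ(t) = (2πσ²)^(−n/2) · exp(−‖t‖²/(2σ²)). Then the smoothed density p̄(y) = ∫ φ(y − x) dμ(x) is differentiable at every y, with gradient ∇p̄(y) = (1/σ²) • ∫ (x − y) · φ(y − x) dμ(x) (a Bochner integral in EuclideanSpace ℝ (Fin n)). -/

import Mathlib

open MeasureTheory InnerProductSpace Metric

section aux

variable {n : ℕ}

local notation "E" => EuclideanSpace ℝ (Fin n)

lemma gauss_hasFDerivAt (σ : ℝ) (hσ : 0 < σ)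
    (φ : EuclideanSpace ℝ (Fin n) → ℝ)
    (hφ : ∀ t, φ t = (2 * Real.pi * σ ^ 2) ^ (-(n : ℝ) / 2) *
        Real.exp (-‖t‖ ^ 2 / (2 * σ ^ 2))) (t : E) :
    HasFDerivAt φ (toDual ℝ E ((-(1 / σ ^ 2) * φ t) • t)) t := by
  set c : ℝ := (2 * Real.pi * σ ^ 2) ^ (-(n : ℝ) / 2) with hc
  have hφf : φ = fun t : E => c * Real.exp (-‖t‖ ^ 2 / (2 * σ ^ 2)) := funext hφ
  have h1 : HasFDerivAt (fun t : E => ‖t‖ ^ 2) (2 • innerSL ℝ t) t :=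
    (hasStrictFDerivAt_norm_sq t).hasFDerivAt
  have h2 := ((h1.neg).const_mul ((2 * σ ^ 2)⁻¹)).exp.const_mul c
  have hfun : (fun t : E => c * Real.exp (-‖t‖ ^ 2 / (2 * σ ^ 2)))
      = fun t : E => c * Real.exp ((2 * σ ^ 2)⁻¹ * -‖t‖ ^ 2) := by
    funext s
    rw [neg_div, div_eq_inv_mul, mul_neg]
  rw [hφf, hfun]
  refine h2.congr_fderiv ?_
  ext v
  have hσ2 : (2 * σ ^ 2) ≠ 0 := by positivity
  beta_reduce
  rw [show ((2 * σ ^ 2)⁻¹ * -‖t‖ ^ 2 : ℝ) = -‖t‖ ^ 2 / (2 * σ ^ 2) by ring]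
  simp [toDual_apply_apply, real_inner_smul_left, hφ t, two_smul, ContinuousLinearMap.smul_apply,
    innerSL_apply_apply]
  field_simp
  ring

lemma gauss_bound (σ : ℝ) (hσ : 0 < σ)
    (φ : EuclideanSpace ℝ (Fin n) → ℝ)
    (hφ : ∀ t, φ t = (2 * Real.pi * σ ^ 2) ^ (-(n : ℝ) / 2) *
        Real.exp (-‖t‖ ^ 2 / (2 * σ ^ 2))) (t : E) :
    ‖t‖ * φ t ≤ (2 * Real.pi * σ ^ 2) ^ (-(n : ℝ) / 2) * σ := by
  set c : ℝ := (2 * Real.pi * σ ^ 2) ^ (-(n : ℝ) / 2) with hc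
  have hcpos : 0 < c := by positivity
  rw [hφ]
  set r := ‖t‖ with hr
  have hr0 : 0 ≤ r := norm_nonneg _
  have key : r * Real.exp (-r ^ 2 / (2 * σ ^ 2)) ≤ σ := by
    have h4 : (r / σ) ^ 2 / 2 = r ^ 2 / (2 * σ ^ 2) := by
      rw [div_pow, div_div]; ring_nf
    have h1 : r ≤ σ * Real.exp (r ^ 2 / (2 * σ ^ 2)) := by
      have h2 : r / σ ≤ 1 + (r / σ) ^ 2 / 2 := by
        nlinarith [sq_nonneg (r / σ - 1)]
      have h3 : 1 + (r / σ) ^ 2 / 2 ≤ Real.exp ((r / σ) ^ 2 / 2) := by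
        have := Real.add_one_le_exp ((r / σ) ^ 2 / 2)
        linarith
      have h5 : r / σ ≤ Real.exp (r ^ 2 / (2 * σ ^ 2)) := by
        rw [← h4]; exact h2.trans h3
      calc r = σ * (r / σ) := by field_simp
        _ ≤ σ * Real.exp (r ^ 2 / (2 * σ ^ 2)) := mul_le_mul_of_nonneg_left h5 hσ.le
    have hexp : Real.exp (-r ^ 2 / (2 * σ ^ 2)) = (Real.exp (r ^ 2 / (2 * σ ^ 2)))⁻¹ := by
      rw [← Real.exp_neg]; ring_nf
    rw [hexp, ← div_eq_mul_inv, div_le_iff₀ (Real.exp_pos _)]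
    linarith [h1]
  calc r * (c * Real.exp (-r ^ 2 / (2 * σ ^ 2)))
      = c * (r * Real.exp (-r ^ 2 / (2 * σ ^ 2))) := by ring
    _ ≤ c * σ := mul_le_mul_of_nonneg_left key hcpos.le

end aux

theorem stmt_10 (n : ℕ) (μ : Measure (EuclideanSpace ℝ (Fin n)))
    [IsProbabilityMeasure μ] (σ : ℝ) (hσ : 0 < σ)
    (φ : EuclideanSpace ℝ (Fin n) → ℝ)
    (hφ : ∀ t, φ t = (2 * Real.pi * σ ^ 2) ^ (-(n : ℝ) / 2) *
        Real.exp (-‖t‖ ^ 2 / (2 * σ ^ 2)))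
    (pbar : EuclideanSpace ℝ (Fin n) → ℝ)
    (hp : ∀ y, pbar y = ∫ x, φ (y - x) ∂μ) :
    ∀ y, HasGradientAt pbar ((1 / σ ^ 2) • ∫ x, φ (y - x) • (x - y) ∂μ) y := by
  intro y
  set c : ℝ := (2 * Real.pi * σ ^ 2) ^ (-(n : ℝ) / 2) with hc
  have hcpos : 0 < c := by positivity
  have hφ0 : ∀ t, 0 < φ t := fun t => by rw [hφ]; exact mul_pos hcpos (Real.exp_pos _)
  have hφle : ∀ t, φ t ≤ c := fun t => by
    rw [hφ]
    have := Real.exp_le_one_iff.mpr (div_nonpos_of_nonpos_of_nonneg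
      (neg_nonpos.mpr (sq_nonneg _)) (by positivity) : -‖t‖ ^ 2 / (2 * σ ^ 2) ≤ 0)
    calc c * Real.exp (-‖t‖ ^ 2 / (2 * σ ^ 2)) ≤ c * 1 :=
        mul_le_mul_of_nonneg_left this hcpos.le
      _ = c := mul_one c
  have hφcont : Continuous φ := by
    have : Continuous fun t : EuclideanSpace ℝ (Fin n) =>
        c * Real.exp (-‖t‖ ^ 2 / (2 * σ ^ 2)) := by fun_prop
    exact this.congr fun t => (hφ t).symm
  set F' : EuclideanSpace ℝ (Fin n) → EuclideanSpace ℝ (Fin n) →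
      EuclideanSpace ℝ (Fin n) →L[ℝ] ℝ := fun x a =>
    toDual ℝ (EuclideanSpace ℝ (Fin n)) ((-(1 / σ ^ 2) * φ (x - a)) • (x - a)) with hF'
  have h_diff : ∀ a x, HasFDerivAt (fun x => φ (x - a)) (F' x a) x := by
    intro a x
    have h1 := gauss_hasFDerivAt σ hσ φ hφ (x - a)
    have h2 : HasFDerivAt (fun x : EuclideanSpace ℝ (Fin n) => x - a)
        (ContinuousLinearMap.id ℝ (EuclideanSpace ℝ (Fin n))) x :=
      (hasFDerivAt_id x).sub_const a
    have := h1.comp x h2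
    refine this.congr_fderiv ?_
    simp [hF', ContinuousLinearMap.comp_id]
  have hF'norm : ∀ x a, ‖F' x a‖ ≤ c / σ := by
    intro x a
    have h0 : ‖F' x a‖ = ‖(-(1 / σ ^ 2) * φ (x - a)) • (x - a)‖ := by
      rw [hF']; exact (toDual ℝ (EuclideanSpace ℝ (Fin n))).norm_map _
    rw [h0, norm_smul]
    have hb := gauss_bound σ hσ φ hφ (x - a)
    have h1 : ‖(-(1 / σ ^ 2) * φ (x - a))‖ = (1 / σ ^ 2) * φ (x - a) := by
      rw [Real.norm_eq_abs, abs_mul, abs_neg, abs_of_nonneg (by positivity : (0:ℝ) ≤ 1 / σ ^ 2),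
        abs_of_nonneg (hφ0 _).le]
    rw [h1]
    calc (1 / σ ^ 2) * φ (x - a) * ‖x - a‖
        = (1 / σ ^ 2) * (‖x - a‖ * φ (x - a)) := by ring
      _ ≤ (1 / σ ^ 2) * (c * σ) := mul_le_mul_of_nonneg_left hb (by positivity)
      _ = c / σ := by field_simp
  have hF'cont : ∀ x, Continuous fun a => F' x a := by
    intro x
    apply (toDual ℝ (EuclideanSpace ℝ (Fin n))).continuous.comp
    fun_prop
  have key : HasFDerivAt (fun x => ∫ a, φ (x - a) ∂μ) (∫ a, F' y a ∂μ) y := by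
    apply hasFDerivAt_integral_of_dominated_of_fderiv_le
      (bound := fun _ => c / σ) (s := Metric.ball y 1) (Metric.ball_mem_nhds y one_pos)
    · filter_upwards with x
      exact ((hφcont.comp (by fun_prop :
        Continuous fun a : EuclideanSpace ℝ (Fin n) => x - a))).aestronglyMeasurable
    · refine ⟨((hφcont.comp (by fun_prop :
        Continuous fun a : EuclideanSpace ℝ (Fin n) => y - a))).aestronglyMeasurable, ?_⟩
      apply HasFiniteIntegral.of_bounded (C := c)
      filter_upwards with a
      rw [Real.norm_eq_abs, abs_of_nonneg (hφ0 _).le]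
      exact hφle _
    · exact (hF'cont y).aestronglyMeasurable
    · filter_upwards with a x _
      exact hF'norm x a
    · exact integrable_const _
    · filter_upwards with a x _
      exact h_diff a x
  have hint : Integrable (fun a => (-(1 / σ ^ 2) * φ (y - a)) • (y - a)) μ := by
    refine ⟨(by fun_prop : Continuous fun a : EuclideanSpace ℝ (Fin n) =>
      (-(1 / σ ^ 2) * φ (y - a)) • (y - a)).aestronglyMeasurable, ?_⟩
    apply HasFiniteIntegral.of_bounded (C := c / σ)
    filter_upwards with a
    have := hF'norm y a
    rwa [hF', (toDual ℝ (EuclideanSpace ℝ (Fin n))).norm_map] at this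
  have hswap : (∫ a, F' y a ∂μ) =
      toDual ℝ (EuclideanSpace ℝ (Fin n))
        (∫ a, (-(1 / σ ^ 2) * φ (y - a)) • (y - a) ∂μ) := by
    rw [hF']
    exact (toDual ℝ (EuclideanSpace ℝ (Fin n))).toLinearIsometry.integral_comp_comm _
  have hval : (∫ a, (-(1 / σ ^ 2) * φ (y - a)) • (y - a) ∂μ) =
      (1 / σ ^ 2) • ∫ x, φ (y - x) • (x - y) ∂μ := by
    rw [← integral_smul]
    congr 1
    funext a
    calc (-(1 / σ ^ 2) * φ (y - a)) • (y - a)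
        = (1 / σ ^ 2 * φ (y - a)) • (a - y) := by
          rw [neg_mul, neg_smul, ← smul_neg, neg_sub]
      _ = (1 / σ ^ 2) • (φ (y - a) • (a - y)) := mul_smul _ _ _
  have hfun : pbar = fun x => ∫ a, φ (x - a) ∂μ := funext hp
  rw [hfun, hasGradientAt_iff_hasFDerivAt, ← hval, ← hswap]
  exact key
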